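/- Let α ∈ (0,1], B = ⌈log₂(2/α)⌉ and B' = ⌊log₂(2/α)⌋. Let U be a random variable uniformly distributed on [0,1], and define B* := B if U > 2^{B−1}α − 1 and B* := B' otherwise. Then E[2^{1−B*}] = α. Moreover, if log₂(2/α) is an integer, then B* = log₂(2/α) almost surely. -/

import Mathlib

open MeasureTheory ProbabilityTheory

/-- the randomized bucket count of HulC.
With `B = ⌈log₂(2/α)⌉`, `B' = ⌊log₂(2/α)⌋`, `U` uniform on `[0,1]` and
`B* = B` if `U > 2^{B−1}α − 1` and `B* = B'` otherwise, we have `E[2^{1−B*}] = α`;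
moreover if `log₂(2/α)` is an integer then `B* = log₂(2/α)` almost surely. -/
theorem hulc_bucket_count {Ω : Type*} [MeasurableSpace Ω]
    (P : Measure Ω) [IsProbabilityMeasure P]
    (α : ℝ) (hα0 : 0 < α) (hα1 : α ≤ 1)
    (B B' : ℕ) (hB : B = ⌈Real.logb 2 (2 / α)⌉₊) (hB' : B' = ⌊Real.logb 2 (2 / α)⌋₊)
    (U : Ω → ℝ) (hUmeas : Measurable U)
    (hUlaw : Measure.map U P = MeasureTheory.volume.restrict (Set.Icc (0 : ℝ) 1))
    (Bstar : Ω → ℕ)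
    (hBstar : ∀ ω, Bstar ω = if (2 : ℝ) ^ (B - 1) * α - 1 < U ω then B else B') :
    (∫ ω, (2 : ℝ) ^ ((1 : ℤ) - (Bstar ω : ℤ)) ∂P) = α ∧
      ((∃ k : ℤ, Real.logb 2 (2 / α) = (k : ℝ)) →
        ∀ᵐ ω ∂P, (Bstar ω : ℝ) = Real.logb 2 (2 / α)) := by
  set L := Real.logb 2 (2 / α) with hLdef
  have hα0' : (0:ℝ) < 2 / α := by positivity
  have h2 : (2:ℝ) ≤ 2 / α := by
    rw [le_div_iff₀ hα0]; linarith
  have hL1 : 1 ≤ L := by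
    have h := Real.logb_le_logb_of_le (b := 2) one_lt_two (by norm_num) h2
    simpa [Real.logb_self_eq_one] using h
  have h2L : (2:ℝ) ^ L = 2 / α := Real.rpow_logb (by norm_num) (by norm_num) hα0'
  by_cases hint : ∃ k : ℤ, L = (k : ℝ)
  · -- integer case
    obtain ⟨k, hk⟩ := hint
    have hk1 : (1:ℝ) ≤ (k:ℝ) := hk ▸ hL1
    have hk1' : 0 ≤ k := by exact_mod_cast le_trans zero_le_one hk1
    set n := k.toNat with hn
    have hnk : (n:ℝ) = L := by
      have h' : (n:ℤ) = k := Int.toNat_of_nonneg hk1'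
      rw [hk]; exact_mod_cast h'
    have hBn : B = n := by rw [hB, ← hnk, Nat.ceil_natCast]
    have hB'n : B' = n := by rw [hB', ← hnk, Nat.floor_natCast]
    have hBs : ∀ ω, Bstar ω = n := by
      intro ω; rw [hBstar]; split_ifs <;> simp [hBn, hB'n]
    have h2n : (2:ℝ) ^ (n:ℕ) = 2 / α := by
      rw [← h2L, ← hnk, Real.rpow_natCast]
    have hαval : (2:ℝ) ^ ((1:ℤ) - (n:ℤ)) = α := by
      rw [zpow_sub₀ (by norm_num : (2:ℝ) ≠ 0), zpow_one, zpow_natCast, h2n]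
      field_simp
    constructor
    · simp only [hBs]
      rw [integral_const]
      simp [hαval]
    · intro _
      filter_upwards with ω
      rw [hBs ω, hnk]
  · -- non-integer case
    have hL0 : (0:ℝ) ≤ L := by linarith
    have hflt : (B':ℝ) < L := by
      refine lt_of_le_of_ne ?_ ?_
      · rw [hB']; exact Nat.floor_le hL0
      · intro h; exact hint ⟨(B':ℤ), by exact_mod_cast h.symm⟩
    have hltc : L < (B:ℝ) := by
      refine lt_of_le_of_ne ?_ ?_
      · rw [hB]; exact Nat.le_ceil L
      · intro h; exact hint ⟨(B:ℤ), by exact_mod_cast h⟩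
    have hBB' : B = B' + 1 := by
      have h1 : B ≤ B' + 1 := by rw [hB, hB']; exact Nat.ceil_le_floor_add_one L
      have h2' : B' < B := by exact_mod_cast hflt.trans hltc
      omega
    have hBm1 : B - 1 = B' := by omega
    have hp : (0:ℝ) < (2:ℝ) ^ B' := by positivity
    have h_lt2 : (2:ℝ) ^ B' < 2 / α := by
      calc (2:ℝ) ^ B' = (2:ℝ) ^ ((B':ℝ)) := by rw [Real.rpow_natCast]
        _ < (2:ℝ) ^ L := Real.rpow_lt_rpow_of_exponent_lt one_lt_two hflt
        _ = 2 / α := h2L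
    have h_gt2 : 2 / α < (2:ℝ) ^ B := by
      calc (2:ℝ)/α = (2:ℝ) ^ L := h2L.symm
        _ < (2:ℝ) ^ ((B:ℝ)) := Real.rpow_lt_rpow_of_exponent_lt one_lt_two hltc
        _ = (2:ℝ) ^ B := by rw [Real.rpow_natCast]
    set t := (2:ℝ) ^ (B - 1) * α - 1 with htdef
    have htB : (2:ℝ) ^ (B - 1) = (2:ℝ) ^ B' := by rw [hBm1]
    have ht0 : 0 < t := by
      have : (2:ℝ) ^ B = 2 * (2:ℝ) ^ B' := by rw [hBB']; ring
      rw [htdef, htB]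
      have h2' : 2 < (2:ℝ) ^ B * α := (div_lt_iff₀ hα0).mp h_gt2
      rw [this] at h2'
      nlinarith
    have ht1 : t < 1 := by
      rw [htdef, htB]
      have h2' : (2:ℝ) ^ B' * α < 2 := (lt_div_iff₀ hα0).mp h_lt2
      linarith
    set a := (2:ℝ) ^ ((1:ℤ) - (B:ℤ)) with hadef
    set b := (2:ℝ) ^ ((1:ℤ) - (B':ℤ)) with hbdef
    set g : ℝ → ℝ := fun u => if t < u then a else b with hgdef
    have hfeq : (fun ω => (2:ℝ) ^ ((1:ℤ) - (Bstar ω : ℤ))) = fun ω => g (U ω) := by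
      funext ω
      rw [hBstar ω]
      by_cases h : t < U ω <;> simp [hgdef, h, hadef, hbdef]
    have hgm : Measurable g :=
      Measurable.ite (measurableSet_lt measurable_const measurable_id)
        measurable_const measurable_const
    have heq1 : Set.EqOn g (fun _ => b) (Set.Icc 0 t) := fun u hu => if_neg (not_lt.2 hu.2)
    have heq2 : Set.EqOn g (fun _ => a) (Set.Ioc t 1) := fun u hu => if_pos hu.1
    have hint1 : IntegrableOn g (Set.Icc 0 t) volume := by
      refine (integrableOn_const ?_).congr_fun heq1.symm measurableSet_Icc
      rw [Real.volume_Icc]; exact ENNReal.ofReal_ne_top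
    have hint2 : IntegrableOn g (Set.Ioc t 1) volume := by
      refine (integrableOn_const ?_).congr_fun heq2.symm measurableSet_Ioc
      rw [Real.volume_Ioc]; exact ENNReal.ofReal_ne_top
    have hdisj : Disjoint (Set.Icc (0:ℝ) t) (Set.Ioc t 1) :=
      (Set.Iic_disjoint_Ioc le_rfl).mono Set.Icc_subset_Iic_self le_rfl
    constructor
    · rw [hfeq, ← integral_map hUmeas.aemeasurable hgm.aestronglyMeasurable, hUlaw,
        ← Set.Icc_union_Ioc_eq_Icc ht0.le ht1.le,
        setIntegral_union hdisj measurableSet_Ioc hint1 hint2,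
        setIntegral_congr_fun measurableSet_Icc heq1,
        setIntegral_congr_fun measurableSet_Ioc heq2,
        setIntegral_const, setIntegral_const,
        Real.volume_real_Icc_of_le ht0.le, Real.volume_real_Ioc_of_le ht1.le, sub_zero]
      have ha : a = ((2:ℝ) ^ B')⁻¹ := by
        rw [hadef, hBB']
        push_cast
        rw [show (1:ℤ) - ((B':ℤ) + 1) = -(B':ℤ) by ring, zpow_neg, zpow_natCast]
      have hb : b = 2 * ((2:ℝ) ^ B')⁻¹ := by
        rw [hbdef, sub_eq_add_neg, zpow_add₀ (by norm_num : (2:ℝ) ≠ 0), zpow_one,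
          zpow_neg, zpow_natCast]
      rw [smul_eq_mul, smul_eq_mul, ha, hb, htdef, htB]
      have hne : (2:ℝ) ^ B' ≠ 0 := hp.ne'
      field_simp
      ring
    · intro h; exact absurd h hint
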